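/- For n >= 1: (2k-2)/(2k-1) * n + (4k^2-6k+3)/(2k-1)^2 + (2k-2)/((2k-1)^2 (2k)^n) equals ||h_0 + (1/2) sum_{i=1}^n (2k)^i h_{i,1}||_{L_1[0,1]}, where h_0 = 1_{[0,1]} and h_{i,1} = (2k)^{-i}(e_{i,1} - e_{i,2}) with e_{i,j} = (2k)^i 1_{((j-1)(2k)^{-i}, j(2k)^{-i}]}. -/

import Mathlib

open Finset intervalIntegral

section Aux
open MeasureTheory Set

noncomputable def Ffun (K : ℝ) (m : ℕ) (t : ℝ) : ℝ :=
  1 + (1/2) * ∑ i ∈ Finset.Icc 1 m, K^i *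
    ((if 0 < t ∧ t ≤ (K^i)⁻¹ then (1:ℝ) else 0) -
     (if (K^i)⁻¹ < t ∧ t ≤ 2*(K^i)⁻¹ then (1:ℝ) else 0))

lemma stepIntegrable (a b : ℝ) :
    Integrable (fun t : ℝ => if a < t ∧ t ≤ b then (1:ℝ) else 0) volume := by
  have : (fun t : ℝ => if a < t ∧ t ≤ b then (1:ℝ) else 0)
      = (Set.Ioc a b).indicator (fun _ => (1:ℝ)) := by
    funext t; simp [Set.indicator_apply, Set.mem_Ioc]
  rw [this]
  exact (integrable_indicator_iff measurableSet_Ioc).2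
    (integrableOn_const measure_Ioc_lt_top.ne)

lemma Ffun_intgr (K : ℝ) (m : ℕ) (a b : ℝ) :
    IntervalIntegrable (Ffun K m) volume a b := by
  unfold Ffun
  apply IntervalIntegrable.add intervalIntegrable_const
  apply IntervalIntegrable.const_mul
  have : (fun t : ℝ => ∑ i ∈ Finset.Icc 1 m, K^i *
      ((if 0 < t ∧ t ≤ (K^i)⁻¹ then (1:ℝ) else 0) -
       (if (K^i)⁻¹ < t ∧ t ≤ 2*(K^i)⁻¹ then (1:ℝ) else 0)))
      = ∑ i ∈ Finset.Icc 1 m, (fun t : ℝ => K^i *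
      ((if 0 < t ∧ t ≤ (K^i)⁻¹ then (1:ℝ) else 0) -
       (if (K^i)⁻¹ < t ∧ t ≤ 2*(K^i)⁻¹ then (1:ℝ) else 0))) := by
    funext t; simp
  rw [this]
  apply IntervalIntegrable.sum
  intro i _
  exact (((stepIntegrable 0 ((K^i)⁻¹)).sub (stepIntegrable ((K^i)⁻¹) (2*(K^i)⁻¹))).const_mul
    (K^i)).intervalIntegrable

lemma integral_const_on {f : ℝ → ℝ} {a b c : ℝ} (hab : a ≤ b)
    (hf : ∀ t ∈ Set.Ioc a b, f t = c) :
    ∫ t in a..b, f t = (b - a) * c := by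
  rw [intervalIntegral.integral_of_le hab, MeasureTheory.setIntegral_congr_fun measurableSet_Ioc hf]
  simp [Real.volume_Ioc, ENNReal.toReal_ofReal (by linarith : (0:ℝ) ≤ b - a), hab]

lemma Ffun_left {K : ℝ} (hK : 1 ≤ K) {m : ℕ} {t : ℝ} (h0 : 0 < t) (h1 : t ≤ (K^m)⁻¹) :
    Ffun K m t = 1 + (1/2) * ∑ i ∈ Finset.Icc 1 m, K^i := by
  unfold Ffun
  congr 2
  apply Finset.sum_congr rfl
  intro i hi
  have him : i ≤ m := (Finset.mem_Icc.mp hi).2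
  have hKi : (0:ℝ) < K^i := pow_pos (by linarith) i
  have hpow : K^i ≤ K^m := pow_le_pow_right₀ hK him
  have h2 : t ≤ (K^i)⁻¹ := le_trans h1 (inv_anti₀ hKi hpow)
  rw [if_pos ⟨h0, h2⟩, if_neg (by rintro ⟨hlt, -⟩; exact absurd h2 (not_le.mpr hlt))]
  ring

lemma Ffun_mid {K : ℝ} (hK : 2 ≤ K) {m : ℕ} {t : ℝ}
    (h0 : (K^(m+1))⁻¹ < t) (h1 : t ≤ 2*(K^(m+1))⁻¹) :
    Ffun K (m+1) t = 1 + (1/2) * ((∑ i ∈ Finset.Icc 1 m, K^i) - K^(m+1)) := by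
  have hKpos : (0:ℝ) < K := by linarith
  unfold Ffun
  rw [Finset.sum_Icc_succ_top (Nat.le_add_left 1 m)]
  have htop : (if 0 < t ∧ t ≤ (K^(m+1))⁻¹ then (1:ℝ) else 0) -
      (if (K^(m+1))⁻¹ < t ∧ t ≤ 2*(K^(m+1))⁻¹ then (1:ℝ) else 0) = -1 := by
    rw [if_neg (by rintro ⟨-, hle⟩; exact absurd h0 (not_lt.mpr hle)), if_pos ⟨h0, h1⟩]
    ring
  rw [htop]
  have hrest : ∀ i ∈ Finset.Icc 1 m, K^i *
      ((if 0 < t ∧ t ≤ (K^i)⁻¹ then (1:ℝ) else 0) -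
       (if (K^i)⁻¹ < t ∧ t ≤ 2*(K^i)⁻¹ then (1:ℝ) else 0)) = K^i := by
    intro i hi
    have him : i ≤ m := (Finset.mem_Icc.mp hi).2
    have hKi : (0:ℝ) < K^i := pow_pos hKpos i
    have key : 2 * K^i ≤ K^(m+1) := by
      calc 2 * K^i ≤ K * K^i := by nlinarith
        _ = K^(i+1) := by ring
        _ ≤ K^(m+1) := pow_le_pow_right₀ (by linarith) (by omega)
    have h2 : t ≤ (K^i)⁻¹ := by
      refine le_trans h1 ?_
      rw [inv_eq_one_div, inv_eq_one_div, mul_one_div]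
      exact (div_le_div_iff₀ (pow_pos hKpos _) hKi).mpr (by nlinarith)
    have h0' : 0 < t := lt_trans (inv_pos.mpr (pow_pos hKpos _)) h0
    rw [if_pos ⟨h0', h2⟩, if_neg (by rintro ⟨hlt, -⟩; exact absurd h2 (not_le.mpr hlt))]
    ring
  rw [Finset.sum_congr rfl hrest]
  ring

lemma Ffun_tail {K : ℝ} (hK : 0 < K) {m : ℕ} {t : ℝ} (h0 : 2*(K^(m+1))⁻¹ < t) :
    Ffun K (m+1) t = Ffun K m t := by
  have hKi : (0:ℝ) < (K^(m+1))⁻¹ := inv_pos.mpr (pow_pos hK _)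
  unfold Ffun
  rw [Finset.sum_Icc_succ_top (Nat.le_add_left 1 m)]
  rw [if_neg (by rintro ⟨-, hle⟩; nlinarith), if_neg (by rintro ⟨-, hle⟩; nlinarith)]
  ring

lemma geomIcc {K : ℝ} (m : ℕ) :
    (K - 1) * ∑ i ∈ Finset.Icc 1 m, K^i = K^(m+1) - K := by
  induction m with
  | zero => simp
  | succ p ih =>
    rw [Finset.sum_Icc_succ_top (Nat.le_add_left 1 p), mul_add, ih]
    ring

lemma Ffun_L1 {K : ℝ} (hK : 4 ≤ K) (n : ℕ) :
    ∫ t in (0:ℝ)..1, |Ffun K n t|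
      = (K - 2)/(K - 1) * n + (K^2 - 3*K + 3)/(K - 1)^2 + (K - 2)/((K - 1)^2 * K^n) := by
  have hKpos : (0:ℝ) < K := by linarith
  have hK1 : K - 1 ≠ 0 := by norm_num; linarith
  induction n with
  | zero =>
    have : ∀ t ∈ Set.Ioc (0:ℝ) 1, |Ffun K 0 t| = 1 := by
      intro t _; simp [Ffun]
    rw [integral_const_on zero_le_one this]
    push_cast
    field_simp
    ring
  | succ m ih =>
    set G : ℝ := ∑ i ∈ Finset.Icc 1 m, K^i with hG
    have hGnn : 0 ≤ G := Finset.sum_nonneg fun i _ => le_of_lt (pow_pos hKpos i)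
    have hGeq : (K - 1) * G = K^(m+1) - K := geomIcc m
    have hP : K ≤ K^(m+1) := le_self_pow₀ (by linarith) (by omega)
    have hQ : (1:ℝ) ≤ K^m := one_le_pow₀ (by linarith)
    set a1 : ℝ := (K^(m+1))⁻¹ with ha1
    have ha1pos : 0 < a1 := inv_pos.mpr (pow_pos hKpos _)
    have ha1le : a1 ≤ K⁻¹ := inv_anti₀ hKpos hP
    have hKinv : K⁻¹ ≤ 4⁻¹ := inv_anti₀ (by norm_num) hK
    have ha2le : 2*a1 ≤ 1 := by
      have := le_trans ha1le hKinv; linarith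
    -- splitting
    have hsplit1 : ∫ t in (0:ℝ)..1, |Ffun K (m+1) t|
        = (∫ t in (0:ℝ)..a1, |Ffun K (m+1) t|) + (∫ t in a1..(2*a1), |Ffun K (m+1) t|)
          + ∫ t in (2*a1)..1, |Ffun K (m+1) t| := by
      rw [intervalIntegral.integral_add_adjacent_intervals ((Ffun_intgr K (m+1) 0 a1).abs)
        ((Ffun_intgr K (m+1) a1 (2*a1)).abs),
        intervalIntegral.integral_add_adjacent_intervals ((Ffun_intgr K (m+1) 0 (2*a1)).abs)
        ((Ffun_intgr K (m+1) (2*a1) 1).abs)]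
    have hsplit2 : ∫ t in (0:ℝ)..1, |Ffun K m t|
        = (∫ t in (0:ℝ)..(2*a1), |Ffun K m t|) + ∫ t in (2*a1)..1, |Ffun K m t| :=
      (intervalIntegral.integral_add_adjacent_intervals ((Ffun_intgr K m 0 (2*a1)).abs)
        ((Ffun_intgr K m (2*a1) 1).abs)).symm
    -- pieces
    have hv1 : ∀ t ∈ Set.Ioc (0:ℝ) a1, |Ffun K (m+1) t| = 1 + (1/2)*(G + K^(m+1)) := by
      intro t ht
      rw [Ffun_left (by linarith) ht.1 ht.2,
        Finset.sum_Icc_succ_top (Nat.le_add_left 1 m), abs_of_pos (by positivity)]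
    have hI1 : ∫ t in (0:ℝ)..a1, |Ffun K (m+1) t| = a1 * (1 + (1/2)*(G + K^(m+1))) := by
      rw [integral_const_on (le_of_lt ha1pos) hv1]; try ring
    have hc2 : 1 + (1/2)*(G - K^(m+1)) ≤ 0 := by nlinarith
    have hv2 : ∀ t ∈ Set.Ioc a1 (2*a1), |Ffun K (m+1) t| = -(1 + (1/2)*(G - K^(m+1))) := by
      intro t ht
      rw [Ffun_mid (by linarith) ht.1 ht.2, abs_of_nonpos hc2]
    have hI2 : ∫ t in a1..(2*a1), |Ffun K (m+1) t|
        = a1 * (-(1 + (1/2)*(G - K^(m+1)))) := by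
      rw [integral_const_on (by linarith) hv2]; try ring
    have hI3 : ∫ t in (2*a1)..1, |Ffun K (m+1) t| = ∫ t in (2*a1)..1, |Ffun K m t| := by
      rw [intervalIntegral.integral_of_le ha2le, intervalIntegral.integral_of_le ha2le]
      apply MeasureTheory.setIntegral_congr_fun measurableSet_Ioc
      intro t ht
      exact congrArg _ (Ffun_tail hKpos ht.1)
    have hI4 : ∫ t in (0:ℝ)..(2*a1), |Ffun K m t| = (2*a1) * (1 + (1/2)*G) := by
      have h2a1 : 2*a1 ≤ (K^m)⁻¹ := by
        rw [ha1, pow_succ]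
        rw [mul_inv]
        have : (0:ℝ) < (K^m)⁻¹ := inv_pos.mpr (pow_pos hKpos m)
        have hKinv2 : K⁻¹ ≤ 2⁻¹ := inv_anti₀ (by norm_num) (by linarith)
        nlinarith
      have hv4 : ∀ t ∈ Set.Ioc (0:ℝ) (2*a1), |Ffun K m t| = 1 + (1/2)*G := by
        intro t ht
        rw [Ffun_left (by linarith) ht.1 (le_trans ht.2 h2a1), abs_of_pos (by positivity)]
      rw [integral_const_on (by linarith) hv4]; try ring
    -- combine
    rw [hsplit1, hI1, hI2, hI3]
    have hback : ∫ t in (2*a1)..1, |Ffun K m t|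
        = ((K - 2)/(K - 1) * m + (K^2 - 3*K + 3)/(K - 1)^2 + (K - 2)/((K - 1)^2 * K^m))
          - (2*a1) * (1 + (1/2)*G) := by
      rw [← hI4, ← ih]; linarith [hsplit2]
    rw [hback]
    have hGval : G = (K^(m+1) - K)/(K-1) := by
      field_simp at hGeq ⊢; linarith
    have hKm : (K:ℝ)^m ≠ 0 := ne_of_gt (pow_pos hKpos m)
    have hKm1 : (K:ℝ)^(m+1) ≠ 0 := ne_of_gt (pow_pos hKpos (m+1))
    rw [hGval, ha1]
    push_cast
    rw [pow_succ] at *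
    field_simp
    ring

end Aux

/-- For `n ≥ 1` and `k ≥ 2`:
`(2k-2)/(2k-1) · n + (4k²-6k+3)/(2k-1)² + (2k-2)/((2k-1)²(2k)^n)` equals the
`L₁[0,1]`-norm of `h_0 + (1/2)∑_{i=1}^n (2k)^i h_{i,1}`, where `h_0 = 1_{[0,1]}` and
`h_{i,1} = (2k)^{-i}(e_{i,1} - e_{i,2})` with
`e_{i,j} = (2k)^i 1_{((j-1)(2k)^{-i}, j(2k)^{-i}]}`. -/
theorem L1_norm_projected_edge (k n : ℕ) (hk : 2 ≤ k) (hn : 1 ≤ n)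
    (e : ℕ → ℕ → ℝ → ℝ)
    (he : e = fun (i j : ℕ) (t : ℝ) => (2 * (k : ℝ)) ^ i *
      (if ((j : ℝ) - 1) * ((2 * (k : ℝ)) ^ i)⁻¹ < t ∧ t ≤ (j : ℝ) * ((2 * (k : ℝ)) ^ i)⁻¹
        then 1 else 0))
    (h : ℕ → ℝ → ℝ)
    (hh : h = fun (i : ℕ) (t : ℝ) => ((2 * (k : ℝ)) ^ i)⁻¹ * (e i 1 t - e i 2 t)) :
    ∫ t in (0 : ℝ)..1,
        |1 + (1 / 2) * ∑ i ∈ Finset.Icc 1 n, (2 * (k : ℝ)) ^ i * h i t|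
      = (2 * (k : ℝ) - 2) / (2 * (k : ℝ) - 1) * n
        + (4 * (k : ℝ) ^ 2 - 6 * (k : ℝ) + 3) / (2 * (k : ℝ) - 1) ^ 2
        + (2 * (k : ℝ) - 2) / ((2 * (k : ℝ) - 1) ^ 2 * (2 * (k : ℝ)) ^ n) := by
  subst hh he
  have hk2 : (2:ℝ) ≤ (k:ℝ) := by exact_mod_cast hk
  have hK4 : (4:ℝ) ≤ 2 * (k:ℝ) := by linarith
  have key := Ffun_L1 hK4 n
  calc ∫ t in (0:ℝ)..1,
        |1 + (1 / 2) * ∑ i ∈ Finset.Icc 1 n, (2 * (k : ℝ)) ^ i *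
          (((2 * (k : ℝ)) ^ i)⁻¹ *
            ((2 * (k : ℝ)) ^ i *
              (if (((1:ℕ) : ℝ) - 1) * ((2 * (k : ℝ)) ^ i)⁻¹ < t ∧
                  t ≤ ((1:ℕ) : ℝ) * ((2 * (k : ℝ)) ^ i)⁻¹ then 1 else 0) -
             (2 * (k : ℝ)) ^ i *
              (if (((2:ℕ) : ℝ) - 1) * ((2 * (k : ℝ)) ^ i)⁻¹ < t ∧
                  t ≤ ((2:ℕ) : ℝ) * ((2 * (k : ℝ)) ^ i)⁻¹ then 1 else 0)))|
      = ∫ t in (0:ℝ)..1, |Ffun (2 * (k:ℝ)) n t| := by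
        apply intervalIntegral.integral_congr
        intro t _
        have hpos : ∀ i : ℕ, (0:ℝ) < (2 * (k:ℝ))^i := fun i => pow_pos (by linarith) i
        beta_reduce
        unfold Ffun
        congr 3
        apply Finset.sum_congr rfl
        intro i _
        have hne : (2 * (k:ℝ))^i ≠ 0 := ne_of_gt (hpos i)
        rw [← mul_sub, ← mul_assoc, mul_inv_cancel₀ hne, one_mul]
        norm_num
    _ = (2 * (k:ℝ) - 2) / (2 * (k:ℝ) - 1) * n
        + ((2 * (k:ℝ))^2 - 3*(2 * (k:ℝ)) + 3) / (2 * (k:ℝ) - 1)^2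
        + (2 * (k:ℝ) - 2) / ((2 * (k:ℝ) - 1)^2 * (2 * (k:ℝ))^n) := key
    _ = (2 * (k : ℝ) - 2) / (2 * (k : ℝ) - 1) * n
        + (4 * (k : ℝ) ^ 2 - 6 * (k : ℝ) + 3) / (2 * (k : ℝ) - 1) ^ 2
        + (2 * (k : ℝ) - 2) / ((2 * (k : ℝ) - 1) ^ 2 * (2 * (k : ℝ)) ^ n) := by
        ring_nf
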